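/- The MPCP function ψ_{τ,p} is concave on [0, +∞): for all x, y ≥ 0 and t ∈ [0,1], ψ_{τ,p}(t·x + (1−t)·y) ≥ t·ψ_{τ,p}(x) + (1−t)·ψ_{τ,p}(y). -/

import Mathlib

noncomputable def psi (τ p : ℝ) (x : ℝ) : ℝ :=
  if |x| ≤ τ ^ (1 / p) then |x| - |x| ^ (1 + p) / ((1 + p) * τ)
  else p * τ ^ (1 / p) / (1 + p)

theorem mpcp_concaveOn (τ p : ℝ) (hτ : 1 < τ) (hp0 : 0 < p) (hp1 : p < 1) :
    ∀ x y t : ℝ, 0 ≤ x → 0 ≤ y → 0 ≤ t → t ≤ 1 →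
      t * psi τ p x + (1 - t) * psi τ p y ≤ psi τ p (t * x + (1 - t) * y) := by
  have hτ0 : (0:ℝ) < τ := lt_trans one_pos hτ
  have h1p : (1:ℝ) ≤ 1 + p := by linarith
  have h1p0 : (0:ℝ) < 1 + p := by linarith
  set T : ℝ := τ ^ (1 / p) with hTdef
  have hT1 : 1 < T := by
    rw [hTdef]
    exact Real.one_lt_rpow_iff_of_pos hτ0 |>.2 (Or.inl ⟨hτ, by positivity⟩)
  have hT0 : 0 < T := lt_trans one_pos hT1
  have hTp : T ^ p = τ := by
    rw [hTdef, ← Real.rpow_mul hτ0.le, one_div_mul_cancel hp0.ne', Real.rpow_one]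
  set f : ℝ → ℝ := fun y => y - ((1 + p) * τ)⁻¹ * y ^ (1 + p) with hfdef
  have hfT : f T = p * T / (1 + p) := by
    have hT1p : T ^ (1 + p) = T * τ := by
      rw [Real.rpow_add hT0, Real.rpow_one, hTp]
    rw [hfdef]
    simp only [hT1p]
    field_simp
    ring
  -- psi equals f ∘ min on nonnegatives
  have hpsi : ∀ x : ℝ, 0 ≤ x → psi τ p x = f (min x T) := by
    intro x hx
    rw [psi, abs_of_nonneg hx]
    by_cases h : x ≤ T
    · rw [if_pos h, min_eq_left h, hfdef]
      ring
    · rw [if_neg h, min_eq_right (le_of_not_ge h), hfT]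
  -- f is concave on Ici 0
  have hconc : ConcaveOn ℝ (Set.Ici (0:ℝ)) f := by
    have h1 : ConvexOn ℝ (Set.Ici (0:ℝ)) (fun y : ℝ => ((1 + p) * τ)⁻¹ • y ^ (1 + p)) :=
      (convexOn_rpow h1p).smul (by positivity)
    have h2 : ConcaveOn ℝ (Set.Ici (0:ℝ)) (fun y : ℝ => y) := concaveOn_id (convex_Ici 0)
    have := h2.sub h1
    exact this
  -- f is monotone on Icc 0 T
  have hmono : MonotoneOn f (Set.Icc (0:ℝ) T) := by
    have hdiff : ∀ y : ℝ, HasDerivAt f (1 - ((1 + p) * τ)⁻¹ * ((1 + p) * y ^ ((1 + p) - 1))) y := by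
      intro y
      exact (hasDerivAt_id y).sub
        (((Real.hasDerivAt_rpow_const (Or.inr h1p))).const_mul _)
    have hcont : ContinuousOn f (Set.Icc 0 T) := fun y _ => ((hdiff y).continuousAt).continuousWithinAt
    refine (strictMonoOn_of_deriv_pos (convex_Icc 0 T) hcont ?_).monotoneOn
    intro y hy
    rw [interior_Icc] at hy
    rw [(hdiff y).deriv]
    have hyp : y ^ p < τ := by
      rw [← hTp]
      exact Real.rpow_lt_rpow hy.1.le hy.2 hp0
    have he : (1 + p) - 1 = p := by ring
    rw [he]
    have hsimp : ((1 + p) * τ)⁻¹ * ((1 + p) * y ^ p) = y ^ p / τ := by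
      field_simp
    rw [hsimp]
    have : y ^ p / τ < 1 := (div_lt_one hτ0).2 hyp
    linarith
  -- min with T, as a concave function
  have hm : ConcaveOn ℝ (Set.Ici (0:ℝ)) (fun x : ℝ => min x T) := by
    have := (concaveOn_id (convex_Ici (0:ℝ))).inf ((concaveOn_const T (convex_Ici 0)) : ConcaveOn ℝ (Set.Ici (0:ℝ)) fun _ => T)
    exact this
  have hImg : (fun x : ℝ => min x T) '' Set.Ici 0 = Set.Icc 0 T := by
    ext y
    constructor
    · rintro ⟨x, hx, rfl⟩
      exact ⟨le_min hx hT0.le, min_le_right _ _⟩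
    · rintro ⟨hy0, hyT⟩
      exact ⟨y, hy0, min_eq_left hyT⟩
  have hF : ConcaveOn ℝ (Set.Ici (0:ℝ)) (f ∘ fun x : ℝ => min x T) := by
    refine ConcaveOn.comp ?_ hm ?_
    · rw [hImg]; exact hconc.subset (Set.Icc_subset_Ici_self) (convex_Icc 0 T)
    · rw [hImg]; exact hmono
  intro x y t hx hy ht ht1
  have hmem : (0:ℝ) ≤ t * x + (1 - t) * y :=
    add_nonneg (mul_nonneg ht hx) (mul_nonneg (by linarith) hy)
  rw [hpsi x hx, hpsi y hy, hpsi _ hmem]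
  have := hF.2 (Set.mem_Ici.2 hx) (Set.mem_Ici.2 hy) ht (by linarith : (0:ℝ) ≤ 1 - t)
    (by ring : t + (1 - t) = 1)
  simpa [smul_eq_mul] using this
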